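/- For all b > 0 and all u ≥ 0: min(b, u) ≤ (b / log(1 + b)) · log(1 + u). -/
import Mathlib


/-- Pointwise inequality for the generalized elliptical potential lemma:
for `b > 0` and `u ≥ 0`, `min b u ≤ (b / log(1+b)) · log(1+u)`. -/
theorem min_le_log_bound (b u : ℝ) (hb : 0 < b) (hu : 0 ≤ u) :
    min b u ≤ (b / Real.log (1 + b)) * Real.log (1 + u) := by
  have hL : 0 < Real.log (1 + b) := Real.log_pos (by linarith)
  rcases le_total b u with h | h
  · rw [min_eq_left h]
    rw [div_mul_eq_mul_div, le_div_iff₀ hL]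
    have : Real.log (1 + b) ≤ Real.log (1 + u) :=
      Real.log_le_log (by linarith) (by linarith)
    nlinarith
  · rw [min_eq_right h]
    rw [div_mul_eq_mul_div, le_div_iff₀ hL]
    -- concavity: log(1+u) ≥ (u/b) * log(1+b)
    have key : (u / b) * Real.log (1 + b) ≤ Real.log (1 + u) := by
      have hc := (strictConcaveOn_log_Ioi.concaveOn).2
        (Set.mem_Ioi.mpr (by linarith : (0:ℝ) < 1))
        (Set.mem_Ioi.mpr (by linarith : (0:ℝ) < 1 + b))
        (by rw [sub_nonneg]; exact div_le_one_of_le₀ h hb.le)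
        (by positivity : (0:ℝ) ≤ u / b)
        (by ring : (1 - u / b) + u / b = 1)
      simp only [smul_eq_mul, Real.log_one, mul_zero, zero_add] at hc
      have heq : (1 - u / b) * 1 + u / b * (1 + b) = 1 + u := by
        field_simp; ring
      rw [heq] at hc
      linarith
    have : u * Real.log (1 + b) = b * ((u / b) * Real.log (1 + b)) := by
      field_simp
    rw [this]
    exact mul_le_mul_of_nonneg_left key hb.le
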